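/- (Theorem 1, expansion form) Assume in addition that the family of equivalence classes of the product functions (Φ_i)_{i ∈ ℕ^N} is a Hilbert basis (complete orthonormal system) of L²(μ). Let T ⊆ {1, …, N} be nonempty and let u : ℝ^N → ℝ be an ANOVA component function for T, i.e. u is Borel measurable, square-integrable with respect to μ, depends only on the coordinates in T (u(ξ) = u(ξ') whenever ξ_t = ξ'_t for all t ∈ T), and has zero partial mean in every coordinate t ∈ T (for μ-a.e. ξ, ∫_ℝ u(ξ_1, …, ξ_{t-1}, s, ξ_{t+1}, …, ξ_N) dμ_t(s) = 0). Then, with u_i = ∫_{ℝ^N} u(ξ) Φ_i(ξ) dμ(ξ), the expansion u = Σ_{i ∈ M_T} u_i Φ_i holds with convergence in L²(μ). -/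

import Mathlib

open MeasureTheory


lemma measurePreserving_update_fst {N : ℕ} (μk : Fin N → Measure ℝ)
    [∀ k, IsProbabilityMeasure (μk k)] (t : Fin N) :
    MeasurePreserving (fun p : (Fin N → ℝ) × ℝ => Function.update p.1 t p.2)
      ((Measure.pi μk).prod (μk t)) (Measure.pi μk) := by
  refine ⟨measurable_update', ?_⟩
  refine (Measure.pi_eq fun s hs => ?_).symm
  rw [Measure.map_apply measurable_update' (MeasurableSet.univ_pi hs)]
  have hpre : (fun p : (Fin N → ℝ) × ℝ => Function.update p.1 t p.2) ⁻¹' (Set.pi Set.univ s)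
      = (Set.pi Set.univ (Function.update s t Set.univ)) ×ˢ (s t) := by
    ext p
    simp only [Set.mem_preimage, Set.mem_pi, Set.mem_univ, true_implies, Set.mem_prod]
    constructor
    · intro h
      refine ⟨fun k => ?_, by simpa using h t⟩
      by_cases hk : k = t
      · subst hk; simp
      · rw [Function.update_of_ne hk]
        simpa [Function.update_of_ne hk] using h k
    · rintro ⟨h1, h2⟩ k
      by_cases hk : k = t
      · subst hk; simpa using h2
      · have := h1 k
        rw [Function.update_of_ne hk] at this ⊢
        exact this
  rw [hpre, Measure.prod_prod, Measure.pi_pi]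
  have hupd : ∀ k, μk k (Function.update s t Set.univ k)
      = Function.update (fun k => μk k (s k)) t 1 k := by
    intro k
    by_cases hk : k = t
    · subst hk; simp
    · simp [Function.update_of_ne hk]
  simp_rw [hupd]
  rw [Finset.prod_update_of_mem (Finset.mem_univ t), one_mul,
    ← Finset.mul_prod_erase Finset.univ _ (Finset.mem_univ t), mul_comm]
  simp [Finset.erase_eq]

lemma integral_pi_eq_integral_integral_update {N : ℕ} (μk : Fin N → Measure ℝ)
    [∀ k, IsProbabilityMeasure (μk k)] (t : Fin N)
    {f : (Fin N → ℝ) → ℝ} (hf : Integrable f (Measure.pi μk)) :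
    ∫ ξ, f ξ ∂(Measure.pi μk)
      = ∫ ξ, ∫ s, f (Function.update ξ t s) ∂(μk t) ∂(Measure.pi μk) := by
  have h := measurePreserving_update_fst μk t
  have hfi : Integrable (fun p : (Fin N → ℝ) × ℝ => f (Function.update p.1 t p.2))
      ((Measure.pi μk).prod (μk t)) :=
    (h.integrable_comp hf.aestronglyMeasurable).mpr hf
  calc ∫ ξ, f ξ ∂(Measure.pi μk)
      = ∫ ξ, f ξ ∂(Measure.map (fun p : (Fin N → ℝ) × ℝ => Function.update p.1 t p.2)
          ((Measure.pi μk).prod (μk t))) := by rw [h.map_eq]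
    _ = ∫ p : (Fin N → ℝ) × ℝ, f (Function.update p.1 t p.2)
          ∂((Measure.pi μk).prod (μk t)) :=
        integral_map h.measurable.aemeasurable (by rw [h.map_eq]; exact hf.aestronglyMeasurable)
    _ = ∫ ξ, ∫ s, f (Function.update ξ t s) ∂(μk t) ∂(Measure.pi μk) :=
        integral_prod _ hfi


/-- Theorem 1, expansion form: If the (equivalence classes of the)
product functions `Φ_i` form a Hilbert basis (complete orthonormal system) of
`L²(μ)`, and `u` is an ANOVA component function for a nonempty `T`, then
`u = Σ_{i ∈ M_T} u_i Φ_i` with `u_i = ∫ u Φ_i dμ`, convergence in `L²(μ)`. -/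
theorem anova_component_gPC_expansion
    (N : ℕ) (μk : Fin N → Measure ℝ) [∀ k, IsProbabilityMeasure (μk k)]
    (φ : Fin N → ℕ → ℝ → ℝ)
    (hmeas : ∀ k n, Measurable (φ k n))
    (horth : ∀ k m n, ∫ x, φ k m x * φ k n x ∂(μk k) = if m = n then 1 else 0)
    (hone : ∀ k, φ k 0 = fun _ => 1)
    (hΦ2 : ∀ i : Fin N → ℕ,
      MemLp (fun ξ : Fin N → ℝ => ∏ k, φ k (i k) (ξ k)) 2 (Measure.pi μk))
    -- the equivalence classes of the `Φ_i` form a complete orthonormal system of `L²(μ)`: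
    (horthΦ : Orthonormal ℝ fun i : Fin N → ℕ =>
      (hΦ2 i).toLp (fun ξ : Fin N → ℝ => ∏ k, φ k (i k) (ξ k)))
    (hcomplete : (Submodule.span ℝ (Set.range fun i : Fin N → ℕ =>
      (hΦ2 i).toLp (fun ξ : Fin N → ℝ => ∏ k, φ k (i k) (ξ k)))).topologicalClosure = ⊤)
    (T : Set (Fin N)) (hT : T.Nonempty)
    (u : (Fin N → ℝ) → ℝ) (humeas : Measurable u)
    (hu2 : MemLp u 2 (Measure.pi μk))
    (hdep : ∀ ξ ξ' : Fin N → ℝ, (∀ t ∈ T, ξ t = ξ' t) → u ξ = u ξ')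
    (hzero : ∀ t ∈ T, ∀ᵐ ξ ∂(Measure.pi μk),
      ∫ s, u (Function.update ξ t s) ∂(μk t) = 0) :
    HasSum
      (fun i : {i : Fin N → ℕ // (∀ t ∈ T, i t ≠ 0) ∧ ∀ t ∉ T, i t = 0} =>
        (∫ ξ : Fin N → ℝ, u ξ * ∏ k, φ k (i.1 k) (ξ k) ∂(Measure.pi μk)) •
          (hΦ2 i.1).toLp (fun ξ : Fin N → ℝ => ∏ k, φ k (i.1 k) (ξ k)))
      (hu2.toLp u) := by
  -- integrability of u * Φ_i
  have hint : ∀ i : Fin N → ℕ,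
      Integrable (fun ξ : Fin N → ℝ => u ξ * ∏ k, φ k (i k) (ξ k)) (Measure.pi μk) := by
    intro i
    have := L2.integrable_inner (𝕜 := ℝ) (hu2.toLp u)
      ((hΦ2 i).toLp (fun ξ : Fin N → ℝ => ∏ k, φ k (i k) (ξ k)))
    refine this.congr ?_
    filter_upwards [hu2.coeFn_toLp, (hΦ2 i).coeFn_toLp] with ξ h1 h2
    rw [h1, h2]
    simp [RCLike.inner_apply, mul_comm]
  -- vanishing of coefficients outside M_T
  have hvanish : ∀ i : Fin N → ℕ, ¬((∀ t ∈ T, i t ≠ 0) ∧ ∀ t ∉ T, i t = 0) →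
      ∫ ξ : Fin N → ℝ, u ξ * ∏ k, φ k (i k) (ξ k) ∂(Measure.pi μk) = 0 := by
    intro i hi
    by_cases hcase : ∃ t ∈ T, i t = 0
    · obtain ⟨t, htT, hit⟩ := hcase
      rw [integral_pi_eq_integral_integral_update μk t (hint i)]
      refine integral_eq_zero_of_ae ?_
      filter_upwards [hzero t htT] with ξ hξ
      have hprod : ∀ s : ℝ,
          (∏ k, φ k (i k) (Function.update ξ t s k)) = ∏ k, φ k (i k) (ξ k) := by
        intro s
        refine Finset.prod_congr rfl fun k _ => ?_
        by_cases hk : k = t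
        · subst hk; simp [hit, hone k]
        · rw [Function.update_of_ne hk]
      simp_rw [hprod]
      rw [integral_mul_const, hξ, zero_mul]
      rfl
    · push_neg at hi hcase
      obtain ⟨t, htT, hit⟩ := hi hcase
      rw [integral_pi_eq_integral_integral_update μk t (hint i)]
      have hinner : ∀ ξ : Fin N → ℝ,
          ∫ s, u (Function.update ξ t s) * ∏ k, φ k (i k) (Function.update ξ t s k)
            ∂(μk t) = 0 := by
        intro ξ
        have h1 : ∀ s : ℝ, u (Function.update ξ t s) = u ξ := fun s =>
          hdep _ _ fun r hr => Function.update_of_ne (by rintro rfl; exact htT hr) _ _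
        have h2 : ∀ s : ℝ, (∏ k, φ k (i k) (Function.update ξ t s k))
            = φ t (i t) s * ∏ k ∈ Finset.univ.erase t, φ k (i k) (ξ k) := by
          intro s
          rw [← Finset.mul_prod_erase Finset.univ
            (fun k => φ k (i k) (Function.update ξ t s k)) (Finset.mem_univ t),
            Function.update_self]
          congr 1
          exact Finset.prod_congr rfl fun k hk => by
            rw [Function.update_of_ne (Finset.ne_of_mem_erase hk)]
        have horth0 : ∫ s, φ t (i t) s ∂(μk t) = 0 := by
          have h := horth t (i t) 0
          rw [hone] at h
          simpa [hit] using h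
        simp_rw [h1, h2]
        rw [integral_const_mul, integral_mul_const, horth0]
        ring
      simp_rw [hinner]
      exact integral_zero _ _
  -- Hilbert basis expansion
  let b : HilbertBasis (Fin N → ℕ) ℝ (Lp ℝ 2 (Measure.pi μk)) :=
    HilbertBasis.mk horthΦ (by rw [hcomplete])
  have hb : ⇑b = fun i : Fin N → ℕ =>
      (hΦ2 i).toLp (fun ξ : Fin N → ℝ => ∏ k, φ k (i k) (ξ k)) :=
    HilbertBasis.coe_mk _ _
  have hcoef : ∀ i : Fin N → ℕ, b.repr (hu2.toLp u) i
      = ∫ ξ : Fin N → ℝ, u ξ * ∏ k, φ k (i k) (ξ k) ∂(Measure.pi μk) := by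
    intro i
    rw [b.repr_apply_apply]
    have : b i = (hΦ2 i).toLp (fun ξ : Fin N → ℝ => ∏ k, φ k (i k) (ξ k)) := by rw [hb]
    rw [this, L2.inner_def]
    refine integral_congr_ae ?_
    filter_upwards [hu2.coeFn_toLp, (hΦ2 i).coeFn_toLp] with ξ h1 h2
    rw [h1, h2]
    simp [RCLike.inner_apply, mul_comm]
  have hsum0 := b.hasSum_repr (hu2.toLp u)
  have hsum : HasSum
      (fun i : Fin N → ℕ =>
        (∫ ξ : Fin N → ℝ, u ξ * ∏ k, φ k (i k) (ξ k) ∂(Measure.pi μk)) •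
          (hΦ2 i).toLp (fun ξ : Fin N → ℝ => ∏ k, φ k (i k) (ξ k)))
      (hu2.toLp u) := by
    have heq : (fun i : Fin N → ℕ =>
        (∫ ξ : Fin N → ℝ, u ξ * ∏ k, φ k (i k) (ξ k) ∂(Measure.pi μk)) •
          (hΦ2 i).toLp (fun ξ : Fin N → ℝ => ∏ k, φ k (i k) (ξ k)))
        = fun i => b.repr (hu2.toLp u) i • b i := by
      funext i
      rw [hcoef]
      exact congrArg _ (congrFun hb i).symm
    rw [heq]
    exact hsum0
  have hsupp : (Function.support fun i : Fin N → ℕ =>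
      (∫ ξ : Fin N → ℝ, u ξ * ∏ k, φ k (i k) (ξ k) ∂(Measure.pi μk)) •
        (hΦ2 i).toLp (fun ξ : Fin N → ℝ => ∏ k, φ k (i k) (ξ k)))
      ⊆ {i : Fin N → ℕ | (∀ t ∈ T, i t ≠ 0) ∧ ∀ t ∉ T, i t = 0} := by
    intro i hi
    by_contra hnot
    apply hi
    simp only [hvanish i hnot, zero_smul]
  exact (hasSum_subtype_iff_of_support_subset hsupp).mpr hsum
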